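/- If f : ℝ → ℝⁿ is differentiable at x with f(x) ≠ 0, then the inverted curve I∘f, where I(x) = x/‖x‖², is differentiable at x with ‖(I∘f)'(x)‖ = ‖f'(x)‖ / ‖f(x)‖². -/

import Mathlib

open EuclideanGeometry

/-- If `f : ℝ → ℝⁿ` is differentiable at `x` with `f x ≠ 0`, then the inverted
curve `I ∘ f` (with `I(x) = x/‖x‖²`) is differentiable at `x` and
`‖(I∘f)'(x)‖ = ‖f'(x)‖/‖f(x)‖²`. -/
theorem inversion_deriv_norm (n : ℕ) (f : ℝ → EuclideanSpace ℝ (Fin n)) (x : ℝ)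
    (hf : DifferentiableAt ℝ f x) (hx : f x ≠ 0) :
    DifferentiableAt ℝ (fun t => (‖f t‖ ^ 2)⁻¹ • f t) x ∧
      ‖deriv (fun t => (‖f t‖ ^ 2)⁻¹ • f t) x‖ = ‖deriv f x‖ / ‖f x‖ ^ 2 := by
  have hfun : (fun t => (‖f t‖ ^ 2)⁻¹ • f t) = fun t => inversion (0 : EuclideanSpace ℝ (Fin n)) 1 (f t) := by
    funext t
    simp [inversion_def, dist_eq_norm, div_pow]
  have hD := (hasFDerivAt_inversion (c := (0 : EuclideanSpace ℝ (Fin n))) (R := 1) (x := f x) hx).comp_hasDerivAt x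
    hf.hasDerivAt
  rw [hfun]
  refine ⟨hD.differentiableAt, ?_⟩
  rw [show (fun t => inversion (0 : EuclideanSpace ℝ (Fin n)) 1 (f t)) = inversion 0 1 ∘ f from rfl, hD.deriv]
  simp only [ContinuousLinearMap.coe_smul', Pi.smul_apply, norm_smul,
    ContinuousLinearMap.coe_coe, LinearIsometryEquiv.norm_map]
  rw [dist_eq_norm, sub_zero]
  rw [Real.norm_eq_abs, abs_of_nonneg (by positivity)]
  rw [div_pow, one_pow, div_eq_mul_inv, one_mul, div_eq_inv_mul]
  congr 1
  exact (Submodule.reflection (Submodule.span ℝ {f x})ᗮ).norm_map (deriv f x)
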